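/- Let {x, α, y} be an asymptotic orthonormal frame with cone Frenet formulas and cone curvature κ, and b, c > 0 with c > bκ(s) for all s. Let γ(s) = (1/√(2cb))(c·x(s) + b·y(s)) be the xy-Smarandache curve, reparametrized by arc length s* with ds*/ds = (c - bκ)/√(2cb). Then the unit tangent of γ equals α(s), and the second derivative of γ with respect to s* equals (√(2bc)κ/(c - bκ))·x(s) - (√(2bc)/(c - bκ))·y(s); consequently the cone curvature of γ, defined as -½⟨d²γ/ds*², d²γ/ds*²⟩, equals 2bcκ(s)/(c - bκ(s))². -/

import Mathlib

noncomputable def mink (X Y : ℝ × ℝ × ℝ) : ℝ :=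
  X.1 * Y.1 + X.2.1 * Y.2.1 - X.2.2 * Y.2.2

lemma mink_expand (a b : ℝ) (X Y : ℝ × ℝ × ℝ) :
    mink (a • X - b • Y) (a • X - b • Y) =
      a ^ 2 * mink X X - 2 * a * b * mink X Y + b ^ 2 * mink Y Y := by
  simp only [mink, Prod.fst_sub, Prod.snd_sub, Prod.smul_fst, Prod.smul_snd, smul_eq_mul]
  ring

theorem stmt5 (x α y : ℝ → ℝ × ℝ × ℝ) (κ : ℝ → ℝ)
    (hx : ∀ s, HasDerivAt x (α s) s)
    (hα : ∀ s, HasDerivAt α (κ s • x s - y s) s)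
    (hy : ∀ s, HasDerivAt y (-(κ s) • α s) s)
    (hframe : ∀ s, mink (x s) (x s) = 0 ∧ mink (y s) (y s) = 0 ∧
      mink (x s) (α s) = 0 ∧ mink (y s) (α s) = 0 ∧
      mink (x s) (y s) = 1 ∧ mink (α s) (α s) = 1)
    (b c : ℝ) (hb : 0 < b) (hc : 0 < c) (hbκ : ∀ s, b * κ s < c)
    (γ : ℝ → ℝ × ℝ × ℝ)
    (hγ : ∀ s, γ s = (1 / Real.sqrt (2 * c * b)) • (c • x s + b • y s))
    (σ : ℝ → ℝ)
    (hσ : ∀ s, HasDerivAt σ ((c - b * κ s) / Real.sqrt (2 * c * b)) s)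
    (Γ Γ' Γ'' : ℝ → ℝ × ℝ × ℝ)
    (hΓγ : ∀ s, Γ (σ s) = γ s)
    (hΓ' : ∀ t, HasDerivAt Γ (Γ' t) t)
    (hΓ'' : ∀ t, HasDerivAt Γ' (Γ'' t) t) :
    ∀ s, Γ' (σ s) = α s ∧
      Γ'' (σ s) = (Real.sqrt (2 * b * c) * κ s / (c - b * κ s)) • x s -
        (Real.sqrt (2 * b * c) / (c - b * κ s)) • y s ∧
      -(1 / 2) * mink (Γ'' (σ s)) (Γ'' (σ s)) =
        2 * b * c * κ s / (c - b * κ s) ^ 2 := by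
  set k := Real.sqrt (2 * c * b) with hk
  have h2cb : (0:ℝ) < 2 * c * b := by positivity
  have hkpos : 0 < k := Real.sqrt_pos.mpr h2cb
  have hksq : k ^ 2 = 2 * c * b := Real.sq_sqrt h2cb.le
  have hkbc : Real.sqrt (2 * b * c) = k := by rw [hk]; ring_nf
  -- first part for all s
  have h1 : ∀ s, Γ' (σ s) = α s := by
    intro s
    have hdiff : c - b * κ s > 0 := sub_pos.mpr (hbκ s)
    have hσne : (c - b * κ s) / k ≠ 0 := by positivity
    have hγd : HasDerivAt γ (((c - b * κ s) / k) • α s) s := by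
      have h0 : HasDerivAt (fun s => (1 / k) • (c • x s + b • y s))
          ((1 / k) • (c • α s + b • (-(κ s) • α s))) s :=
        (((hx s).const_smul c).add ((hy s).const_smul b)).const_smul (1 / k)
      have heq : (fun s => (1 / k) • (c • x s + b • y s)) = γ := by
        funext u; rw [hγ u]
      rw [heq] at h0
      convert h0 using 1
      match_scalars
      field_simp
      ring
    have hcomp : HasDerivAt γ (((c - b * κ s) / k) • Γ' (σ s)) s := by
      have h0 := (hΓ' (σ s)).scomp s (hσ s)
      have heq : Γ ∘ σ = γ := funext hΓγ
      rwa [heq] at h0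
    have h0 := hγd.unique hcomp
    have := smul_right_injective (ℝ × ℝ × ℝ) hσne (h0.symm)
    exact this
  -- second part for all s
  have h2 : ∀ s, Γ'' (σ s) = (Real.sqrt (2 * b * c) * κ s / (c - b * κ s)) • x s -
      (Real.sqrt (2 * b * c) / (c - b * κ s)) • y s := by
    intro s
    have hdiff : c - b * κ s > 0 := sub_pos.mpr (hbκ s)
    have hσne : (c - b * κ s) / k ≠ 0 := by positivity
    have hcomp : HasDerivAt (Γ' ∘ σ) (((c - b * κ s) / k) • Γ'' (σ s)) s :=
      (hΓ'' (σ s)).scomp s (hσ s)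
    have heq : Γ' ∘ σ = α := funext fun u => h1 u
    rw [heq] at hcomp
    have huniq : κ s • x s - y s = ((c - b * κ s) / k) • Γ'' (σ s) :=
      (hα s).unique hcomp
    have hΓe : Γ'' (σ s) = (((c - b * κ s) / k)⁻¹) • (κ s • x s - y s) := by
      rw [huniq, smul_smul, inv_mul_cancel₀ hσne, one_smul]
    rw [hΓe, hkbc]
    match_scalars <;> (field_simp; try ring)
  intro s
  have hdiff : c - b * κ s > 0 := sub_pos.mpr (hbκ s)
  refine ⟨h1 s, h2 s, ?_⟩
  rw [h2 s, mink_expand]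
  obtain ⟨hxx, hyy, hxα, hyα, hxy, hαα⟩ := hframe s
  rw [hxx, hyy, hxy, hkbc]
  have hdne : c - b * κ s ≠ 0 := hdiff.ne'
  have h2bc : 2 * b * c = k ^ 2 := by rw [hksq]; ring
  rw [h2bc]
  set d := c - b * κ s with hd
  ring
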